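/- Let 0 < δ < π/2, α > 0, and let s : (0,δ) → ℝ be continuous and nowhere zero, with ∫₀^θ |s(τ)·cot(τ)| dτ < ∞ for all θ ∈ (0,δ). Set R(θ) = ∫₀^θ s(τ)·cot(τ) dτ and μ(θ) = 1 + s(θ)/R(θ). Suppose μ(θ) tends to a limit μ_p ∈ ℝ as θ → 0⁺ with μ_p > α + 1. Then s(θ)/sin^α(θ) → 0 as θ → 0⁺. -/

import Mathlib

open Set Filter MeasureTheory intervalIntegral Real

/-- Main umbilic-slope theorem (converse part): if
`μ(θ) = 1 + s(θ)/∫₀^θ s cot → μ_p` as `θ → 0⁺` with `μ_p > α + 1`,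
then `s(θ)/sin^α θ → 0`. -/
theorem stmt_5 (δ α μ_p : ℝ) (hδ0 : 0 < δ) (hδ : δ < Real.pi / 2) (hα : 0 < α)
    (s : ℝ → ℝ) (hs : ContinuousOn s (Set.Ioo 0 δ))
    (hsne : ∀ θ ∈ Set.Ioo 0 δ, s θ ≠ 0)
    (hint : ∀ θ ∈ Set.Ioo 0 δ,
      IntervalIntegrable (fun τ => s τ * Real.cot τ) MeasureTheory.volume 0 θ)
    (hμ : Filter.Tendsto (fun θ => 1 + s θ / ∫ τ in (0:ℝ)..θ, s τ * Real.cot τ)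
      (nhdsWithin 0 (Set.Ioi 0)) (nhds μ_p))
    (hμp : α + 1 < μ_p) :
    Filter.Tendsto (fun θ => s θ / Real.sin θ ^ α)
      (nhdsWithin 0 (Set.Ioi 0)) (nhds 0) := by
  set R : ℝ → ℝ := fun θ => ∫ τ in (0:ℝ)..θ, s τ * Real.cot τ with hR
  set β : ℝ := (α + μ_p - 1) / 2 with hβ
  have hαβ : α < β := by rw [hβ]; linarith
  have hβμ : β < μ_p - 1 := by rw [hβ]; linarith
  have hβ0 : 0 < β := lt_trans hα hαβ
  set ε : ℝ := μ_p - 1 - β with hε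
  have hε0 : 0 < ε := by rw [hε]; linarith
  -- positivity facts on (0, δ)
  have hsin : ∀ θ ∈ Ioo (0:ℝ) δ, 0 < Real.sin θ := fun θ hθ =>
    Real.sin_pos_of_pos_of_lt_pi hθ.1 (lt_trans hθ.2 (lt_trans hδ (by linarith [Real.pi_pos])))
  have hcos : ∀ θ ∈ Ioo (0:ℝ) δ, 0 < Real.cos θ := fun θ hθ =>
    Real.cos_pos_of_mem_Ioo ⟨by linarith [hθ.1, Real.pi_pos], lt_trans hθ.2 hδ⟩
  -- continuity of the integrand on (0, δ)
  have hci : ContinuousOn (fun τ => s τ * Real.cot τ) (Ioo 0 δ) := by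
    have : ContinuousOn (fun τ => Real.cos τ / Real.sin τ) (Ioo 0 δ) :=
      (Real.continuous_cos.continuousOn).div Real.continuous_sin.continuousOn
        (fun θ hθ => ne_of_gt (hsin θ hθ))
    have h2 := hs.mul this
    refine h2.congr fun θ _ => ?_
    simp [Real.cot_eq_cos_div_sin]
  -- derivative of R
  have hRd : ∀ θ ∈ Ioo (0:ℝ) δ, HasDerivAt R (s θ * Real.cot θ) θ := by
    intro θ hθ
    refine intervalIntegral.integral_hasDerivAt_right (hint θ hθ)
      (hci.stronglyMeasurableAtFilter isOpen_Ioo θ hθ) ?_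
    exact hci.continuousAt (isOpen_Ioo.mem_nhds hθ)
  -- get η where the quotient is controlled
  have hev : ∀ᶠ θ in nhdsWithin (0:ℝ) (Ioi 0),
      |(1 + s θ / R θ) - μ_p| < ε := by
    have := Metric.tendsto_nhds.mp hμ ε hε0
    filter_upwards [this] with θ h using by rwa [Real.dist_eq] at h
  have hIoo : Ioo (0:ℝ) δ ∈ nhdsWithin (0:ℝ) (Ioi 0) :=
    Ioo_mem_nhdsGT_of_mem ⟨le_refl 0, hδ0⟩
  obtain ⟨η, hη1, hη2⟩ := mem_nhdsGT_iff_exists_Ioo_subset.mp (inter_mem hIoo hev)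
  have hη0 : (0:ℝ) < η := hη1
  -- facts on (0, η)
  have hmem : ∀ θ ∈ Ioo (0:ℝ) η, θ ∈ Ioo (0:ℝ) δ := fun θ hθ => (hη2 hθ).1
  have habs : ∀ θ ∈ Ioo (0:ℝ) η, |(1 + s θ / R θ) - μ_p| < ε := fun θ hθ => (hη2 hθ).2
  have hquot : ∀ θ ∈ Ioo (0:ℝ) η, β < s θ / R θ := by
    intro θ hθ
    have := abs_lt.mp (habs θ hθ)
    linarith [this.1]
  have hquot' : ∀ θ ∈ Ioo (0:ℝ) η, s θ / R θ < μ_p - 1 + ε := by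
    intro θ hθ
    have := abs_lt.mp (habs θ hθ)
    linarith [this.2]
  have hRne : ∀ θ ∈ Ioo (0:ℝ) η, R θ ≠ 0 := by
    intro θ hθ hR0
    have := hquot θ hθ
    rw [hR0, div_zero] at this
    linarith
  -- the auxiliary function g
  set g : ℝ → ℝ := fun θ => Real.log (R θ) - β * Real.log (Real.sin θ) with hg
  have hgd : ∀ θ ∈ Ioo (0:ℝ) η,
      HasDerivAt g ((s θ / R θ - β) * (Real.cos θ / Real.sin θ)) θ := by
    intro θ hθ
    have hθδ := hmem θ hθ
    have h1 : HasDerivAt (fun θ => Real.log (R θ)) (s θ * Real.cot θ / R θ) θ :=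
      (hRd θ hθδ).log (hRne θ hθ)
    have h2 : HasDerivAt (fun θ => Real.log (Real.sin θ)) (Real.cos θ / Real.sin θ) θ :=
      (Real.hasDerivAt_sin θ).log (ne_of_gt (hsin θ hθδ))
    have := h1.sub (h2.const_mul β)
    refine this.congr_deriv ?_
    rw [Real.cot_eq_cos_div_sin]
    field_simp
  have hgpos : ∀ θ ∈ Ioo (0:ℝ) η, 0 < (s θ / R θ - β) * (Real.cos θ / Real.sin θ) := by
    intro θ hθ
    have hθδ := hmem θ hθ
    exact mul_pos (by linarith [hquot θ hθ]) (div_pos (hcos θ hθδ) (hsin θ hθδ))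
  have hgmono : StrictMonoOn g (Ioo 0 η) := by
    refine strictMonoOn_of_deriv_pos (convex_Ioo 0 η) ?_ ?_
    · exact fun θ hθ => ((hgd θ hθ).continuousAt).continuousWithinAt
    · intro θ hθ
      rw [interior_Ioo] at hθ
      rw [(hgd θ hθ).deriv]
      exact hgpos θ hθ
  -- bound on (0, η/2)
  set θ₁ : ℝ := η / 2 with hθ₁
  have hθ₁mem : θ₁ ∈ Ioo (0:ℝ) η := ⟨by positivity, by rw [hθ₁]; linarith⟩
  set C : ℝ := g θ₁ with hC
  set M : ℝ := μ_p - 1 + ε with hM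
  have hbound : ∀ θ ∈ Ioo (0:ℝ) θ₁,
      |s θ / Real.sin θ ^ α| ≤ M * Real.exp C * Real.sin θ ^ (β - α) := by
    intro θ hθ
    have hθη : θ ∈ Ioo (0:ℝ) η := ⟨hθ.1, lt_trans hθ.2 hθ₁mem.2⟩
    have hθδ := hmem θ hθη
    have hsinθ := hsin θ hθδ
    have hgθ : g θ ≤ C := le_of_lt (hgmono hθη hθ₁mem hθ.2)
    have hlog : Real.log (R θ) ≤ C + β * Real.log (Real.sin θ) := by
      have : g θ = Real.log (R θ) - β * Real.log (Real.sin θ) := rfl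
      linarith [hgθ, this ▸ hgθ]
    have hRabs : |R θ| ≤ Real.exp C * Real.sin θ ^ β := by
      have h1 : |R θ| = Real.exp (Real.log (R θ)) := by
        rw [← Real.log_abs, Real.exp_log (abs_pos.mpr (hRne θ hθη))]
      rw [h1]
      calc Real.exp (Real.log (R θ)) ≤ Real.exp (C + β * Real.log (Real.sin θ)) :=
            Real.exp_le_exp.mpr hlog
        _ = Real.exp C * Real.sin θ ^ β := by
            rw [Real.exp_add, Real.rpow_def_of_pos hsinθ, mul_comm (Real.log _)]
    have hsabs : |s θ| ≤ M * (Real.exp C * Real.sin θ ^ β) := by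
      have h2 : |s θ| = |s θ / R θ| * |R θ| := by
        rw [← abs_mul, div_mul_cancel₀ _ (hRne θ hθη)]
      have h3 : |s θ / R θ| ≤ M := by
        have hq := hquot θ hθη
        have hq' := hquot' θ hθη
        rw [abs_of_pos (lt_trans hβ0 hq)]
        exact le_of_lt hq'
      rw [h2]
      exact mul_le_mul h3 hRabs (abs_nonneg _) (by rw [hM]; linarith)
    have hsinα : (0:ℝ) < Real.sin θ ^ α := Real.rpow_pos_of_pos hsinθ α
    rw [abs_div, abs_of_pos hsinα, div_le_iff₀ hsinα]
    calc |s θ| ≤ M * (Real.exp C * Real.sin θ ^ β) := hsabs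
      _ = M * Real.exp C * Real.sin θ ^ (β - α) * Real.sin θ ^ α := by
          rw [mul_assoc (M * Real.exp C), ← Real.rpow_add hsinθ]
          ring_nf
  -- the bound tends to zero
  have htend : Tendsto (fun θ => M * Real.exp C * Real.sin θ ^ (β - α))
      (nhdsWithin (0:ℝ) (Ioi 0)) (nhds 0) := by
    have h1 : Tendsto (fun θ : ℝ => θ ^ (β - α)) (nhdsWithin (0:ℝ) (Ioi 0)) (nhds 0) := by
      have hc : ContinuousAt (fun x : ℝ => x ^ (β - α)) 0 :=
        Real.continuousAt_rpow_const 0 (β - α) (Or.inr (by linarith))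
      have h := hc.tendsto.mono_left (nhdsWithin_le_nhds (s := Ioi (0:ℝ)))
      rwa [Real.zero_rpow (by linarith : (0:ℝ) < β - α).ne'] at h
    have h2 : Tendsto (fun θ : ℝ => Real.sin θ ^ (β - α)) (nhdsWithin (0:ℝ) (Ioi 0)) (nhds 0) := by
      apply squeeze_zero'
      · filter_upwards [hIoo] with θ hθ
        exact le_of_lt (Real.rpow_pos_of_pos (hsin θ hθ) _)
      · filter_upwards [hIoo] with θ hθ
        exact Real.rpow_le_rpow (le_of_lt (hsin θ hθ)) (le_of_lt (Real.sin_lt hθ.1))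
          (by linarith)
      · exact h1
    have := h2.const_mul (M * Real.exp C)
    rwa [mul_zero] at this
  -- conclude by squeezing
  apply squeeze_zero_norm'
  · have hIoo₁ : Ioo (0:ℝ) θ₁ ∈ nhdsWithin (0:ℝ) (Ioi 0) :=
      Ioo_mem_nhdsGT_of_mem ⟨le_refl 0, hθ₁mem.1⟩
    filter_upwards [hIoo₁] with θ hθ
    exact hbound θ hθ
  · exact htend
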